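/- Suppose the sub-models are linear in the observations: M(x) = Λ(x) Y(X) for a deterministic p×n matrix Λ(x), where Y(X) ∈ R^n is a centered random vector with covariance matrix K = k(X,X). If Λ(x) K Λ(x)^T is invertible, then the aggregated predictor M_A(x) = k_M(x)^T K_M(x)^{-1} M(x) equals λ_A(x)^T Y(X), where λ_A(x)^T = k(x,X) Λ(x)^T (Λ(x) K Λ(x)^T)^{-1} Λ(x), and the aggregated variance satisfies v_A(x) = k(x,x) - λ_A(x)^T k(X,x). -/

import Mathlib

open MeasureTheory Matrix

lemma my_int_mul {Ω : Type*} [MeasurableSpace Ω] {μ : Measure Ω} {f g : Ω → ℝ}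
    (hf : MemLp f 2 μ) (hg : MemLp g 2 μ) : Integrable (fun ω => f ω * g ω) μ := by
  have h := hf.smul (p := 2) (q := 2) (r := 1) hg
  rw [memLp_one_iff_integrable] at h
  exact h.congr (ae_of_all _ fun ω => by simp [Pi.smul_apply, smul_eq_mul, mul_comm])

lemma my_transfer {m n : ℕ} (A : Matrix (Fin m) (Fin n) ℝ) (u : Fin n → ℝ) (w : Fin m → ℝ) :
    (A *ᵥ u) ⬝ᵥ w = u ⬝ᵥ (Aᵀ *ᵥ w) := by
  rw [Matrix.dotProduct_mulVec, Matrix.vecMul_transpose]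

/-- Linear sub-models: if `M(x) = Λ Y(X)` with `Λ K Λᵀ` invertible, then the aggregated
predictor `M_A(x) = k_Mᵀ K_M⁻¹ M(x)` equals `λ_Aᵀ Y(X)` with
`λ_Aᵀ = k(x,X) Λᵀ (Λ K Λᵀ)⁻¹ Λ`, and `v_A(x) = k(x,x) - λ_Aᵀ k(X,x)`. -/
theorem stmt_1 {Ω : Type*} [MeasurableSpace Ω] (μ : Measure Ω) [IsProbabilityMeasure μ]
    {n q : ℕ} (Yx : Ω → ℝ) (YX : Ω → Fin n → ℝ)
    (hYc : ∫ ω, Yx ω ∂μ = 0) (hXc : ∀ i, ∫ ω, YX ω i ∂μ = 0)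
    (hYL2 : MemLp Yx 2 μ) (hXL2 : ∀ i, MemLp (fun ω => YX ω i) 2 μ)
    (K : Matrix (Fin n) (Fin n) ℝ) (hK : ∀ i j, K i j = ∫ ω, YX ω i * YX ω j ∂μ)
    (kx : Fin n → ℝ) (hkx : ∀ i, kx i = ∫ ω, Yx ω * YX ω i ∂μ)
    (kxx : ℝ) (hkxx : kxx = ∫ ω, Yx ω ^ 2 ∂μ)
    (L : Matrix (Fin q) (Fin n) ℝ)
    (M : Fin q → Ω → ℝ) (hM : ∀ i ω, M i ω = (L *ᵥ YX ω) i)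
    (hinv : IsUnit (L * K * Lᵀ).det)
    (MA : Ω → ℝ)
    (hMA : ∀ ω, MA ω = (L *ᵥ kx) ⬝ᵥ ((L * K * Lᵀ)⁻¹ *ᵥ (fun i => M i ω))) :
    (∀ ω, MA ω = kx ⬝ᵥ (Lᵀ *ᵥ ((L * K * Lᵀ)⁻¹ *ᵥ (L *ᵥ YX ω)))) ∧
    ∫ ω, (Yx ω - MA ω) ^ 2 ∂μ
      = kxx - kx ⬝ᵥ (Lᵀ *ᵥ ((L * K * Lᵀ)⁻¹ *ᵥ (L *ᵥ kx))) := by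
  set A : Matrix (Fin q) (Fin q) ℝ := L * K * Lᵀ with hA
  set b : Fin q → ℝ := A⁻¹ᵀ *ᵥ (L *ᵥ kx) with hb
  set c : Fin n → ℝ := Lᵀ *ᵥ b with hc
  -- Part 1
  have part1 : ∀ ω, MA ω = kx ⬝ᵥ (Lᵀ *ᵥ (A⁻¹ *ᵥ (L *ᵥ YX ω))) := by
    intro ω
    have hMe : (fun i => M i ω) = L *ᵥ YX ω := funext fun i => hM i ω
    rw [hMA, hMe, my_transfer L kx]
  -- MA as linear combination with coefficients c
  have hMc : ∀ ω, MA ω = c ⬝ᵥ YX ω := by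
    intro ω
    rw [part1 ω, hc, my_transfer Lᵀ b (YX ω), Matrix.transpose_transpose,
      hb, my_transfer A⁻¹ᵀ (L *ᵥ kx) (L *ᵥ YX ω), Matrix.transpose_transpose,
      my_transfer L kx]
  -- c ⬝ᵥ kx equals the RHS expression
  have hck : c ⬝ᵥ kx = kx ⬝ᵥ (Lᵀ *ᵥ (A⁻¹ *ᵥ (L *ᵥ kx))) := by
    rw [hc, my_transfer Lᵀ b kx, Matrix.transpose_transpose,
      hb, my_transfer A⁻¹ᵀ (L *ᵥ kx) (L *ᵥ kx), Matrix.transpose_transpose,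
      my_transfer L kx]
  -- key identity c ⬝ᵥ (K *ᵥ c) = c ⬝ᵥ kx
  have hAb : Aᵀ *ᵥ b = L *ᵥ kx := by
    rw [hb, Matrix.mulVec_mulVec, ← Matrix.transpose_mul, Matrix.nonsing_inv_mul A hinv,
      Matrix.transpose_one, Matrix.one_mulVec]
  have hcKc : c ⬝ᵥ (K *ᵥ c) = c ⬝ᵥ kx := by
    calc c ⬝ᵥ (K *ᵥ c) = (Lᵀ *ᵥ b) ⬝ᵥ (K *ᵥ c) := by rw [hc]
      _ = b ⬝ᵥ (L *ᵥ (K *ᵥ (Lᵀ *ᵥ b))) := by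
          rw [my_transfer Lᵀ b, Matrix.transpose_transpose, hc]
      _ = b ⬝ᵥ (A *ᵥ b) := by rw [hA, Matrix.mulVec_mulVec, Matrix.mulVec_mulVec]
      _ = (Aᵀ *ᵥ b) ⬝ᵥ b := by rw [my_transfer Aᵀ b b, Matrix.transpose_transpose]
      _ = (L *ᵥ kx) ⬝ᵥ b := by rw [hAb]
      _ = b ⬝ᵥ (L *ᵥ kx) := dotProduct_comm _ _
      _ = (Lᵀ *ᵥ b) ⬝ᵥ kx := by rw [my_transfer Lᵀ b kx, Matrix.transpose_transpose]
      _ = c ⬝ᵥ kx := by rw [hc]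
  refine ⟨part1, ?_⟩
  -- integrability
  have iY2 : Integrable (fun ω => Yx ω ^ 2) μ := by
    simpa [sq] using my_int_mul hYL2 hYL2
  have iYX : ∀ i, Integrable (fun ω => Yx ω * YX ω i) μ := fun i => my_int_mul hYL2 (hXL2 i)
  have iXX : ∀ i j, Integrable (fun ω => YX ω i * YX ω j) μ := fun i j =>
    my_int_mul (hXL2 i) (hXL2 j)
  have iYS : Integrable (fun ω => ∑ i, c i * (Yx ω * YX ω i)) μ :=
    integrable_finset_sum _ fun i _ => (iYX i).const_mul (c i)
  have iSS : Integrable (fun ω => ∑ i, ∑ j, (c i * c j) * (YX ω i * YX ω j)) μ :=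
    integrable_finset_sum _ fun i _ =>
      integrable_finset_sum _ fun j _ => (iXX i j).const_mul (c i * c j)
  -- compute the integrals
  have hIS : ∫ ω, ∑ i, c i * (Yx ω * YX ω i) ∂μ = c ⬝ᵥ kx := by
    rw [integral_finset_sum _ fun i _ => (iYX i).const_mul (c i)]
    simp only [integral_const_mul]
    simp [dotProduct, hkx]
  have hISS : ∫ ω, ∑ i, ∑ j, (c i * c j) * (YX ω i * YX ω j) ∂μ = c ⬝ᵥ (K *ᵥ c) := by
    rw [integral_finset_sum _ fun i _ =>
      integrable_finset_sum _ fun j _ => (iXX i j).const_mul (c i * c j)]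
    have : ∀ i : Fin n, ∫ ω, ∑ j, (c i * c j) * (YX ω i * YX ω j) ∂μ
        = ∑ j, (c i * c j) * K i j := by
      intro i
      rw [integral_finset_sum _ fun j _ => (iXX i j).const_mul (c i * c j)]
      simp only [integral_const_mul]
      exact Finset.sum_congr rfl fun j _ => by rw [hK]
    rw [Finset.sum_congr rfl fun i _ => this i]
    simp only [dotProduct, mulVec, Finset.mul_sum]
    exact Finset.sum_congr rfl fun i _ => Finset.sum_congr rfl fun j _ => by
      ring
  -- expand the square
  have hfun : (fun ω => (Yx ω - MA ω) ^ 2)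
      = fun ω => Yx ω ^ 2 - 2 * (∑ i, c i * (Yx ω * YX ω i))
          + ∑ i, ∑ j, (c i * c j) * (YX ω i * YX ω j) := by
    funext ω
    rw [hMc ω]
    have e2 : Yx ω * (c ⬝ᵥ YX ω) = ∑ i, c i * (Yx ω * YX ω i) := by
      simp only [dotProduct, Finset.mul_sum]
      exact Finset.sum_congr rfl fun i _ => by ring
    have e3 : (c ⬝ᵥ YX ω) * (c ⬝ᵥ YX ω) = ∑ i, ∑ j, (c i * c j) * (YX ω i * YX ω j) := by
      simp only [dotProduct, Finset.sum_mul_sum]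
      exact Finset.sum_congr rfl fun i _ => Finset.sum_congr rfl fun j _ => by ring
    rw [← e2, ← e3]; ring
  have i1 : Integrable (fun ω => Yx ω ^ 2 - 2 * ∑ i, c i * (Yx ω * YX ω i)) μ :=
    iY2.sub (iYS.const_mul 2)
  have i2 : Integrable (fun ω => 2 * ∑ i, c i * (Yx ω * YX ω i)) μ := iYS.const_mul 2
  rw [hfun, integral_add i1 iSS, integral_sub iY2 i2, integral_const_mul, hIS, hISS, hcKc,
    ← hkxx, ← hck]
  ring
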